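/- Let W ∈ C^α([0,T]; C^{β₂}(V;V)) and let (Y,Y') be a linear controlled rough path of W with values in V, i.e. Y ∈ C^α([0,T];V), Y' ∈ C^α([0,T]; L(C^{β₂}(V;V);V)), and R^Y_{s,t} := Y_t − Y_s − Y'_s(W_t − W_s) has finite 2α-Hölder seminorm. Define F_t := W_t(Y_t), i.e. the evaluation of W(t,·) at Y_t. Then F is also a linear controlled rough path of W: with F'_t ∈ L(C^{β₂}(V;V);V) defined by F'_t(φ) := φ(Y_t) + DW_t(Y_t)(Y'_t(φ)), the map F belongs to C^α([0,T];V), F' belongs to C^α([0,T];L(C^{β₂}(V;V);V)), and the remainder R^F_{s,t} := F_t − F_s − F'_s(W_t − W_s) has finite 2α-Hölder seminorm. -/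

import Mathlib

open Set

variable {V : Type*} [NormedAddCommGroup V] [NormedSpace ℝ V]

/-- `φ` is a test function of `C^{β₂}(V;V)` with norm pieces bounded by `N`. -/
def TestBound (β₀ β₁ β₂ : ℝ) (φ : V → V) (N : ℝ) : Prop :=
  ContDiff ℝ 2 φ ∧
  (∀ x : V, ‖φ x‖ ≤ N * (1 + ‖x‖) ^ β₀) ∧
  (∀ x : V, ‖fderiv ℝ φ x‖ ≤ N * (1 + ‖x‖) ^ β₁) ∧
  (∀ x : V, ‖iteratedFDeriv ℝ 2 φ x‖ ≤ N * (1 + ‖x‖) ^ β₂)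

section Aux
open Metric
variable {E : Type*} [NormedAddCommGroup E] [NormedSpace ℝ E]

lemma norm_fderiv_fderiv (f : V → E) (x : V) :
    ‖fderiv ℝ (fderiv ℝ f) x‖ = ‖iteratedFDeriv ℝ 2 f x‖ := by
  rw [← norm_iteratedFDeriv_fderiv (n := 1), ← norm_iteratedFDeriv_fderiv (n := 0),
    norm_iteratedFDeriv_zero]

lemma mvt_ball {f : V → E} (hf : Differentiable ℝ f) {B K : ℝ}
    (hK : ∀ x : V, ‖x‖ ≤ B → ‖fderiv ℝ f x‖ ≤ K) {a b : V} (ha : ‖a‖ ≤ B) (hb : ‖b‖ ≤ B) :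
    ‖f b - f a‖ ≤ K * ‖b - a‖ := by
  refine Convex.norm_image_sub_le_of_norm_fderiv_le (fun x _ => hf.differentiableAt)
    (fun x hx => hK x (by simpa using hx)) (convex_closedBall (0:V) B)
    (by simpa using ha) (by simpa using hb)

lemma mvt_seg {f : V → E} (hf : Differentiable ℝ f) {a b : V} {K : ℝ}
    (hK : ∀ x ∈ segment ℝ a b, ‖fderiv ℝ f x‖ ≤ K) :
    ‖f b - f a‖ ≤ K * ‖b - a‖ :=
  Convex.norm_image_sub_le_of_norm_fderiv_le (fun x _ => hf.differentiableAt)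
    hK (convex_segment a b) (left_mem_segment ℝ a b) (right_mem_segment ℝ a b)

lemma seg_norm_le {a b : V} {B : ℝ} (ha : ‖a‖ ≤ B) (hb : ‖b‖ ≤ B) :
    ∀ x ∈ segment ℝ a b, ‖x‖ ≤ B := by
  intro x hx
  have h : segment ℝ a b ⊆ closedBall (0:V) B :=
    (convex_closedBall (0:V) B).segment_subset (by simpa using ha) (by simpa using hb)
  simpa using h hx

lemma seg_dist_le {a b : V} : ∀ x ∈ segment ℝ a b, ‖x - a‖ ≤ ‖b - a‖ := by
  intro x hx
  have h : segment ℝ a b ⊆ closedBall a ‖b - a‖ :=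
    (convex_closedBall a ‖b - a‖).segment_subset (by simp)
      (by simp [mem_closedBall, dist_eq_norm])
  simpa [mem_closedBall, dist_eq_norm] using h hx

lemma norm_add3_le (a b c : E) : ‖a + b + c‖ ≤ ‖a‖ + ‖b‖ + ‖c‖ :=
  (norm_add_le _ _).trans (add_le_add (norm_add_le _ _) le_rfl)

lemma norm_add4_le (a b c e : E) : ‖a + b + c + e‖ ≤ ‖a‖ + ‖b‖ + ‖c‖ + ‖e‖ :=
  (norm_add_le _ _).trans (add_le_add (norm_add3_le _ _ _) le_rfl)

end Aux

/-- Lemma 5.3: if `W ∈ C^α([0,T]; C^{β₂}(V;V))` and `(Y, Y')` is a linear controlled rough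
path of `W` with values in `V` (here `Y' t : (V → V) → V` is a linear operator on test
functions, with operator norm bound `MY'`, α-Hölder with constant `CY'`, and remainder
`R^Y_{s,t} = Y_t - Y_s - Y'_s(W_t - W_s)` bounded by `CR |t-s|^{2α}`), then
`F_t = W_t(Y_t)` is also a linear controlled rough path of `W`, with Gubinelli derivative
`F'_t(φ) = φ(Y_t) + DW_t(Y_t)(Y'_t(φ))`: `F` and `F'` are α-Hölder (operator-norm
statements being expressed through test functions) and the remainder
`R^F_{s,t} = F_t - F_s - F'_s(W_t - W_s)` is 2α-Hölder. -/
theorem stmt_19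
    (T α β₀ β₁ β₂ : ℝ) (hT : 0 < T) (hα1 : 1 / 3 < α) (hα2 : α ≤ 1 / 2)
    (hβ₀ : 0 ≤ β₀) (hβ₁ : 0 ≤ β₁) (hβ₂ : 0 ≤ β₂)
    (W : ℝ → V → V) (MW NW : ℝ)
    (hWsm : ∀ t ∈ Icc (0 : ℝ) T, ContDiff ℝ 2 (W t))
    (hWval : ∀ t ∈ Icc (0 : ℝ) T, TestBound β₀ β₁ β₂ (W t) MW)
    (hWH0 : ∀ s ∈ Icc (0 : ℝ) T, ∀ t ∈ Icc (0 : ℝ) T, ∀ x : V,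
      ‖W t x - W s x‖ ≤ NW * |t - s| ^ α * (1 + ‖x‖) ^ β₀)
    (hWH1 : ∀ s ∈ Icc (0 : ℝ) T, ∀ t ∈ Icc (0 : ℝ) T, ∀ x : V,
      ‖fderiv ℝ (fun y => W t y - W s y) x‖ ≤ NW * |t - s| ^ α * (1 + ‖x‖) ^ β₁)
    (hWH2 : ∀ s ∈ Icc (0 : ℝ) T, ∀ t ∈ Icc (0 : ℝ) T, ∀ x : V,
      ‖iteratedFDeriv ℝ 2 (fun y => W t y - W s y) x‖ ≤ NW * |t - s| ^ α * (1 + ‖x‖) ^ β₂)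
    (Y : ℝ → V) (Y' : ℝ → (V → V) → V) (CY MY' CY' CR : ℝ)
    (hY'lin : ∀ t ∈ Icc (0 : ℝ) T, IsLinearMap ℝ (Y' t))
    (hCY : ∀ s ∈ Icc (0 : ℝ) T, ∀ t ∈ Icc (0 : ℝ) T, ‖Y t - Y s‖ ≤ CY * |t - s| ^ α)
    (hY'bdd : ∀ t ∈ Icc (0 : ℝ) T, ∀ (φ : V → V) (N : ℝ), 0 ≤ N → TestBound β₀ β₁ β₂ φ N →
      ‖Y' t φ‖ ≤ MY' * N)
    (hY'H : ∀ s ∈ Icc (0 : ℝ) T, ∀ t ∈ Icc (0 : ℝ) T,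
      ∀ (φ : V → V) (N : ℝ), 0 ≤ N → TestBound β₀ β₁ β₂ φ N →
      ‖Y' t φ - Y' s φ‖ ≤ CY' * N * |t - s| ^ α)
    (hR : ∀ s ∈ Icc (0 : ℝ) T, ∀ t ∈ Icc (0 : ℝ) T,
      ‖Y t - Y s - Y' s (fun x => W t x - W s x)‖ ≤ CR * |t - s| ^ (2 * α)) :
    -- F is α-Hölder with values in V
    (∃ C : ℝ, ∀ s ∈ Icc (0 : ℝ) T, ∀ t ∈ Icc (0 : ℝ) T,
      ‖W t (Y t) - W s (Y s)‖ ≤ C * |t - s| ^ α) ∧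
    -- F' is α-Hölder in operator norm
    (∃ C : ℝ, ∀ s ∈ Icc (0 : ℝ) T, ∀ t ∈ Icc (0 : ℝ) T,
      ∀ (φ : V → V) (N : ℝ), 0 ≤ N → TestBound β₀ β₁ β₂ φ N →
        ‖(φ (Y t) + fderiv ℝ (W t) (Y t) (Y' t φ))
            - (φ (Y s) + fderiv ℝ (W s) (Y s) (Y' s φ))‖ ≤ C * N * |t - s| ^ α) ∧
    -- the remainder R^F is 2α-Hölder
    (∃ C : ℝ, ∀ s ∈ Icc (0 : ℝ) T, ∀ t ∈ Icc (0 : ℝ) T,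
      ‖W t (Y t) - W s (Y s)
          - ((W t (Y s) - W s (Y s))
              + fderiv ℝ (W s) (Y s) (Y' s (fun x => W t x - W s x)))‖
        ≤ C * |t - s| ^ (2 * α)) := by
  have hα0 : (0:ℝ) < α := by linarith
  have h0T : (0:ℝ) ∈ Icc (0:ℝ) T := ⟨le_refl 0, hT.le⟩
  have hTT : T ∈ Icc (0:ℝ) T := ⟨hT.le, le_refl T⟩
  have h12 : (1 : WithTop ℕ∞) ≤ 2 := by norm_num
  have hTα : (0:ℝ) < |T - 0| ^ α := Real.rpow_pos_of_pos (by simp [abs_of_pos hT]; exact hT) α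
  -- nonnegativity of constants
  have hMW : 0 ≤ MW := by
    have h := (hWval 0 h0T).2.1 0
    simpa using le_trans (norm_nonneg _) h
  have hNW : 0 ≤ NW := by
    have h := hWH0 0 h0T T hTT 0
    have h' : (0:ℝ) ≤ NW * |T - 0| ^ α := by
      simpa using le_trans (norm_nonneg _) h
    nlinarith
  have hCY0 : 0 ≤ CY := by
    have h := hCY 0 h0T T hTT
    have h' : (0:ℝ) ≤ CY * |T - 0| ^ α := le_trans (norm_nonneg _) h
    nlinarith
  -- uniform bound on Y
  set B : ℝ := ‖Y 0‖ + CY * T ^ α with hBdef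
  have hB : ∀ t ∈ Icc (0:ℝ) T, ‖Y t‖ ≤ B := by
    intro t ht
    have h1 : ‖Y t - Y 0‖ ≤ CY * |t - 0| ^ α := hCY 0 h0T t ht
    have h2 : |t - 0| ^ α ≤ T ^ α := by
      rw [sub_zero, abs_of_nonneg ht.1]
      exact Real.rpow_le_rpow ht.1 ht.2 hα0.le
    have h3 : ‖Y t‖ - ‖Y 0‖ ≤ ‖Y t - Y 0‖ := norm_sub_norm_le _ _
    have h4 : CY * |t - 0| ^ α ≤ CY * T ^ α := mul_le_mul_of_nonneg_left h2 hCY0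
    simp only [hBdef]; linarith
  have hB0 : (0:ℝ) ≤ B := le_trans (norm_nonneg _) (hB 0 h0T)
  have h1B : (0:ℝ) < 1 + B := by linarith
  -- rpow monotone helper
  have hP : ∀ β : ℝ, 0 ≤ β → ∀ x : V, ‖x‖ ≤ B → (1 + ‖x‖) ^ β ≤ (1 + B) ^ β := by
    intro β hβ x hx
    exact Real.rpow_le_rpow (by positivity) (by linarith) hβ
  have hPB : ∀ β : ℝ, (0:ℝ) ≤ (1 + B) ^ β := fun β => Real.rpow_nonneg (by linarith) β
  -- fderiv bound for W u
  have hDW : ∀ u ∈ Icc (0:ℝ) T, ∀ x : V, ‖x‖ ≤ B → ‖fderiv ℝ (W u) x‖ ≤ MW * (1 + B) ^ β₁ := by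
    intro u hu x hx
    exact le_trans ((hWval u hu).2.2.1 x) (mul_le_mul_of_nonneg_left (hP β₁ hβ₁ x hx) hMW)
  -- second derivative bound for W u
  have hD2W : ∀ u ∈ Icc (0:ℝ) T, ∀ x : V, ‖x‖ ≤ B →
      ‖fderiv ℝ (fderiv ℝ (W u)) x‖ ≤ MW * (1 + B) ^ β₂ := by
    intro u hu x hx
    rw [norm_fderiv_fderiv]
    exact le_trans ((hWval u hu).2.2.2 x) (mul_le_mul_of_nonneg_left (hP β₂ hβ₂ x hx) hMW)
  have hWd : ∀ u ∈ Icc (0:ℝ) T, Differentiable ℝ (W u) :=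
    fun u hu => (hWsm u hu).differentiable (by norm_num)
  refine ⟨⟨NW * (1 + B) ^ β₀ + MW * (1 + B) ^ β₁ * CY, ?_⟩,
    ⟨(1 + B) ^ β₁ * CY + NW * (1 + B) ^ β₁ * MY' + MW * (1 + B) ^ β₂ * CY * MY'
      + MW * (1 + B) ^ β₁ * CY', ?_⟩,
    ⟨NW * (1 + B) ^ β₁ * CY + MW * (1 + B) ^ β₂ * CY * CY + MW * (1 + B) ^ β₁ * CR, ?_⟩⟩
  · -- Part 1
    intro s hs t ht
    set d : ℝ := |t - s| ^ α with hd
    have hd0 : 0 ≤ d := Real.rpow_nonneg (abs_nonneg _) α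
    have e1 : ‖W t (Y t) - W s (Y t)‖ ≤ NW * (1 + B) ^ β₀ * d :=
      calc ‖W t (Y t) - W s (Y t)‖ ≤ NW * d * (1 + ‖Y t‖) ^ β₀ := hWH0 s hs t ht (Y t)
        _ ≤ NW * d * (1 + B) ^ β₀ :=
            mul_le_mul_of_nonneg_left (hP β₀ hβ₀ _ (hB t ht)) (mul_nonneg hNW hd0)
        _ = NW * (1 + B) ^ β₀ * d := by ring
    have e2 : ‖W s (Y t) - W s (Y s)‖ ≤ MW * (1 + B) ^ β₁ * CY * d :=
      calc ‖W s (Y t) - W s (Y s)‖ ≤ MW * (1 + B) ^ β₁ * ‖Y t - Y s‖ :=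
            mvt_ball (hWd s hs) (hDW s hs) (hB s hs) (hB t ht)
        _ ≤ MW * (1 + B) ^ β₁ * (CY * d) :=
            mul_le_mul_of_nonneg_left (hCY s hs t ht) (mul_nonneg hMW (hPB β₁))
        _ = MW * (1 + B) ^ β₁ * CY * d := by ring
    calc ‖W t (Y t) - W s (Y s)‖ ≤ ‖W t (Y t) - W s (Y t)‖ + ‖W s (Y t) - W s (Y s)‖ := by
          have : W t (Y t) - W s (Y s) = (W t (Y t) - W s (Y t)) + (W s (Y t) - W s (Y s)) := by
            abel
          rw [this]; exact norm_add_le _ _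
      _ ≤ NW * (1 + B) ^ β₀ * d + MW * (1 + B) ^ β₁ * CY * d := by linarith
      _ = (NW * (1 + B) ^ β₀ + MW * (1 + B) ^ β₁ * CY) * d := by ring
  · -- Part 2
    intro s hs t ht φ N hN hTB
    obtain ⟨hφsm, hφ0, hφ1, hφ2⟩ := hTB
    set d : ℝ := |t - s| ^ α with hd
    have hd0 : 0 ≤ d := Real.rpow_nonneg (abs_nonneg _) α
    have hMN : (0:ℝ) ≤ MY' * N := le_trans (norm_nonneg _) (hY'bdd t ht φ N hN ⟨hφsm, hφ0, hφ1, hφ2⟩)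
    have hY't : ‖Y' t φ‖ ≤ MY' * N := hY'bdd t ht φ N hN ⟨hφsm, hφ0, hφ1, hφ2⟩
    have key : (φ (Y t) + fderiv ℝ (W t) (Y t) (Y' t φ))
        - (φ (Y s) + fderiv ℝ (W s) (Y s) (Y' s φ))
        = (φ (Y t) - φ (Y s))
          + ((fderiv ℝ (W t) (Y t) - fderiv ℝ (W s) (Y t)) (Y' t φ))
          + ((fderiv ℝ (W s) (Y t) - fderiv ℝ (W s) (Y s)) (Y' t φ))
          + (fderiv ℝ (W s) (Y s) (Y' t φ - Y' s φ)) := by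
      simp only [ContinuousLinearMap.sub_apply, map_sub]; abel
    have hA : ‖φ (Y t) - φ (Y s)‖ ≤ (1 + B) ^ β₁ * CY * N * d := by
      have hφd : Differentiable ℝ φ := hφsm.differentiable (by norm_num)
      have hKφ : ∀ x : V, ‖x‖ ≤ B → ‖fderiv ℝ φ x‖ ≤ N * (1 + B) ^ β₁ := fun x hx =>
        le_trans (hφ1 x) (mul_le_mul_of_nonneg_left (hP β₁ hβ₁ x hx) hN)
      calc ‖φ (Y t) - φ (Y s)‖ ≤ N * (1 + B) ^ β₁ * ‖Y t - Y s‖ :=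
            mvt_ball hφd hKφ (hB s hs) (hB t ht)
        _ ≤ N * (1 + B) ^ β₁ * (CY * d) :=
            mul_le_mul_of_nonneg_left (hCY s hs t ht) (mul_nonneg hN (hPB β₁))
        _ = (1 + B) ^ β₁ * CY * N * d := by ring
    have hsub : fderiv ℝ (fun y => W t y - W s y) (Y t)
        = fderiv ℝ (W t) (Y t) - fderiv ℝ (W s) (Y t) :=
      fderiv_sub ((hWd t ht) _) ((hWd s hs) _)
    have hB1 : ‖(fderiv ℝ (W t) (Y t) - fderiv ℝ (W s) (Y t)) (Y' t φ)‖
        ≤ NW * (1 + B) ^ β₁ * MY' * N * d := by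
      have hop : ‖fderiv ℝ (W t) (Y t) - fderiv ℝ (W s) (Y t)‖ ≤ NW * d * (1 + B) ^ β₁ := by
        rw [← hsub]
        exact le_trans (hWH1 s hs t ht (Y t))
          (mul_le_mul_of_nonneg_left (hP β₁ hβ₁ _ (hB t ht)) (mul_nonneg hNW hd0))
      calc ‖(fderiv ℝ (W t) (Y t) - fderiv ℝ (W s) (Y t)) (Y' t φ)‖
          ≤ ‖fderiv ℝ (W t) (Y t) - fderiv ℝ (W s) (Y t)‖ * ‖Y' t φ‖ :=
            ContinuousLinearMap.le_opNorm _ _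
        _ ≤ (NW * d * (1 + B) ^ β₁) * (MY' * N) :=
            mul_le_mul hop hY't (norm_nonneg _)
              (mul_nonneg (mul_nonneg hNW hd0) (hPB β₁))
        _ = NW * (1 + B) ^ β₁ * MY' * N * d := by ring
    have hB2 : ‖(fderiv ℝ (W s) (Y t) - fderiv ℝ (W s) (Y s)) (Y' t φ)‖
        ≤ MW * (1 + B) ^ β₂ * CY * MY' * N * d := by
      have hfd : Differentiable ℝ (fderiv ℝ (W s)) :=
        ((hWsm s hs).fderiv_right (m := 1) (by norm_num)).differentiable (by norm_num)
      have hop : ‖fderiv ℝ (W s) (Y t) - fderiv ℝ (W s) (Y s)‖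
          ≤ MW * (1 + B) ^ β₂ * ‖Y t - Y s‖ :=
        mvt_ball hfd (hD2W s hs) (hB s hs) (hB t ht)
      calc ‖(fderiv ℝ (W s) (Y t) - fderiv ℝ (W s) (Y s)) (Y' t φ)‖
          ≤ ‖fderiv ℝ (W s) (Y t) - fderiv ℝ (W s) (Y s)‖ * ‖Y' t φ‖ :=
            ContinuousLinearMap.le_opNorm _ _
        _ ≤ (MW * (1 + B) ^ β₂ * (CY * d)) * (MY' * N) := by
            refine mul_le_mul (le_trans hop ?_) hY't (norm_nonneg _)
              (mul_nonneg (mul_nonneg hMW (hPB β₂)) (mul_nonneg hCY0 hd0))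
            exact mul_le_mul_of_nonneg_left (hCY s hs t ht) (mul_nonneg hMW (hPB β₂))
        _ = MW * (1 + B) ^ β₂ * CY * MY' * N * d := by ring
    have hB3 : ‖fderiv ℝ (W s) (Y s) (Y' t φ - Y' s φ)‖
        ≤ MW * (1 + B) ^ β₁ * CY' * N * d := by
      calc ‖fderiv ℝ (W s) (Y s) (Y' t φ - Y' s φ)‖
          ≤ ‖fderiv ℝ (W s) (Y s)‖ * ‖Y' t φ - Y' s φ‖ := ContinuousLinearMap.le_opNorm _ _
        _ ≤ (MW * (1 + B) ^ β₁) * (CY' * N * d) :=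
            mul_le_mul (hDW s hs _ (hB s hs)) (hY'H s hs t ht φ N hN ⟨hφsm, hφ0, hφ1, hφ2⟩)
              (norm_nonneg _) (mul_nonneg hMW (hPB β₁))
        _ = MW * (1 + B) ^ β₁ * CY' * N * d := by ring
    calc ‖(φ (Y t) + fderiv ℝ (W t) (Y t) (Y' t φ))
          - (φ (Y s) + fderiv ℝ (W s) (Y s) (Y' s φ))‖
        ≤ ‖φ (Y t) - φ (Y s)‖
          + ‖(fderiv ℝ (W t) (Y t) - fderiv ℝ (W s) (Y t)) (Y' t φ)‖
          + ‖(fderiv ℝ (W s) (Y t) - fderiv ℝ (W s) (Y s)) (Y' t φ)‖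
          + ‖fderiv ℝ (W s) (Y s) (Y' t φ - Y' s φ)‖ := by
          rw [key]; exact norm_add4_le _ _ _ _
      _ ≤ (1 + B) ^ β₁ * CY * N * d + NW * (1 + B) ^ β₁ * MY' * N * d
          + MW * (1 + B) ^ β₂ * CY * MY' * N * d + MW * (1 + B) ^ β₁ * CY' * N * d := by
          linarith
      _ = ((1 + B) ^ β₁ * CY + NW * (1 + B) ^ β₁ * MY' + MW * (1 + B) ^ β₂ * CY * MY'
          + MW * (1 + B) ^ β₁ * CY') * N * d := by ring
  · -- Part 3
    intro s hs t ht
    set d : ℝ := |t - s| ^ α with hd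
    have hd0 : 0 ≤ d := Real.rpow_nonneg (abs_nonneg _) α
    have hdd : |t - s| ^ (2 * α) = d * d := by
      rw [show (2 * α) = α + α by ring, Real.rpow_add' (abs_nonneg _) (by linarith)]
    set L : V →L[ℝ] V := fderiv ℝ (W s) (Y s) with hL
    have key : W t (Y t) - W s (Y s)
        - ((W t (Y s) - W s (Y s)) + L (Y' s (fun x => W t x - W s x)))
        = ((W t (Y t) - W s (Y t)) - (W t (Y s) - W s (Y s)))
          + ((W s (Y t) - L (Y t)) - (W s (Y s) - L (Y s)))
          + (L (Y t - Y s - Y' s (fun x => W t x - W s x))) := by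
      simp only [map_sub]; abel
    have hA : ‖(W t (Y t) - W s (Y t)) - (W t (Y s) - W s (Y s))‖
        ≤ NW * (1 + B) ^ β₁ * CY * (d * d) := by
      have hdiff : Differentiable ℝ (fun y => W t y - W s y) :=
        (hWd t ht).sub (hWd s hs)
      have hK : ∀ x : V, ‖x‖ ≤ B →
          ‖fderiv ℝ (fun y => W t y - W s y) x‖ ≤ NW * d * (1 + B) ^ β₁ := fun x hx =>
        le_trans (hWH1 s hs t ht x)
          (mul_le_mul_of_nonneg_left (hP β₁ hβ₁ x hx) (mul_nonneg hNW hd0))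
      have := mvt_ball hdiff hK (hB s hs) (hB t ht)
      calc ‖(W t (Y t) - W s (Y t)) - (W t (Y s) - W s (Y s))‖
          ≤ NW * d * (1 + B) ^ β₁ * ‖Y t - Y s‖ := this
        _ ≤ NW * d * (1 + B) ^ β₁ * (CY * d) :=
            mul_le_mul_of_nonneg_left (hCY s hs t ht)
              (mul_nonneg (mul_nonneg hNW hd0) (hPB β₁))
        _ = NW * (1 + B) ^ β₁ * CY * (d * d) := by ring
    have hBt : ‖(W s (Y t) - L (Y t)) - (W s (Y s) - L (Y s))‖
        ≤ MW * (1 + B) ^ β₂ * CY * CY * (d * d) := by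
      have hfd : Differentiable ℝ (fderiv ℝ (W s)) :=
        ((hWsm s hs).fderiv_right (m := 1) (by norm_num)).differentiable (by norm_num)
      have hg : Differentiable ℝ (fun x => W s x - L x) :=
        (hWd s hs).sub L.differentiable
      have hK : ∀ x ∈ segment ℝ (Y s) (Y t),
          ‖fderiv ℝ (fun x => W s x - L x) x‖ ≤ MW * (1 + B) ^ β₂ * ‖Y t - Y s‖ := by
        intro x hx
        have hxB : ‖x‖ ≤ B := seg_norm_le (hB s hs) (hB t ht) x hx
        have heq : fderiv ℝ (fun x => W s x - L x) x = fderiv ℝ (W s) x - L := by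
          rw [fderiv_fun_sub ((hWd s hs) x) (L.differentiableAt), L.fderiv]
        rw [heq]
        have h1 : ‖fderiv ℝ (W s) x - fderiv ℝ (W s) (Y s)‖ ≤ MW * (1 + B) ^ β₂ * ‖x - Y s‖ :=
          mvt_ball hfd (hD2W s hs) (hB s hs) hxB
        have h2 : ‖x - Y s‖ ≤ ‖Y t - Y s‖ := seg_dist_le x hx
        calc ‖fderiv ℝ (W s) x - L‖ ≤ MW * (1 + B) ^ β₂ * ‖x - Y s‖ := h1
          _ ≤ MW * (1 + B) ^ β₂ * ‖Y t - Y s‖ :=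
              mul_le_mul_of_nonneg_left h2 (mul_nonneg hMW (hPB β₂))
      have hmvt := mvt_seg hg hK
      calc ‖(W s (Y t) - L (Y t)) - (W s (Y s) - L (Y s))‖
          ≤ MW * (1 + B) ^ β₂ * ‖Y t - Y s‖ * ‖Y t - Y s‖ := hmvt
        _ ≤ MW * (1 + B) ^ β₂ * (CY * d) * (CY * d) := by
            have h3 : ‖Y t - Y s‖ ≤ CY * d := hCY s hs t ht
            have h4 : (0:ℝ) ≤ MW * (1 + B) ^ β₂ := mul_nonneg hMW (hPB β₂)
            have h5 : (0:ℝ) ≤ CY * d := mul_nonneg hCY0 hd0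
            have h6 : ‖Y t - Y s‖ * ‖Y t - Y s‖ ≤ (CY * d) * (CY * d) :=
              mul_le_mul h3 h3 (norm_nonneg _) h5
            nlinarith [h6, h4]
        _ = MW * (1 + B) ^ β₂ * CY * CY * (d * d) := by ring
    have hCt : ‖L (Y t - Y s - Y' s (fun x => W t x - W s x))‖
        ≤ MW * (1 + B) ^ β₁ * (CR * |t - s| ^ (2 * α)) := by
      calc ‖L (Y t - Y s - Y' s (fun x => W t x - W s x))‖
          ≤ ‖L‖ * ‖Y t - Y s - Y' s (fun x => W t x - W s x)‖ :=
            ContinuousLinearMap.le_opNorm _ _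
        _ ≤ (MW * (1 + B) ^ β₁) * (CR * |t - s| ^ (2 * α)) :=
            mul_le_mul (hDW s hs _ (hB s hs)) (hR s hs t ht) (norm_nonneg _)
              (mul_nonneg hMW (hPB β₁))
    calc ‖W t (Y t) - W s (Y s)
          - ((W t (Y s) - W s (Y s)) + L (Y' s (fun x => W t x - W s x)))‖
        ≤ ‖(W t (Y t) - W s (Y t)) - (W t (Y s) - W s (Y s))‖
          + ‖(W s (Y t) - L (Y t)) - (W s (Y s) - L (Y s))‖
          + ‖L (Y t - Y s - Y' s (fun x => W t x - W s x))‖ := by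
          rw [key]; exact norm_add3_le _ _ _
      _ ≤ NW * (1 + B) ^ β₁ * CY * (d * d) + MW * (1 + B) ^ β₂ * CY * CY * (d * d)
          + MW * (1 + B) ^ β₁ * (CR * |t - s| ^ (2 * α)) := by linarith
      _ = (NW * (1 + B) ^ β₁ * CY + MW * (1 + B) ^ β₂ * CY * CY + MW * (1 + B) ^ β₁ * CR)
          * |t - s| ^ (2 * α) := by rw [hdd]; ring
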